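/- Let θ ∈ (0,1] and x ∈ D((-A)^θ). Then for every s > 0 the series A e^{sA} x := −∑_n α_n e^{-α_n s} ⟨x, e_n⟩ e_n converges in H, the map s ↦ A e^{sA} x is Bochner integrable on (0,t] for every t ≥ 0, and ∫₀^t (−A e^{sA} x) ds = x − e^{tA} x. -/

import Mathlib

open scoped RealInnerProductSpace
open MeasureTheory

private lemma aux_rpow_le_exp {u a : ℝ} (hu : 0 < u) (ha : 0 ≤ a) (ha1 : a ≤ 1) :
    u ^ a ≤ Real.exp u := by
  rw [Real.rpow_def_of_pos hu]
  apply Real.exp_le_exp.mpr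
  rcases le_or_gt (Real.log u) 0 with h | h
  · have : Real.log u * a ≤ 0 := mul_nonpos_of_nonpos_of_nonneg h ha
    linarith
  · have h1 : Real.log u * a ≤ Real.log u := by nlinarith
    have h2 : Real.log u ≤ u - 1 := Real.log_le_sub_one_of_pos hu
    linarith

private lemma aux_bound {θ s a : ℝ} (hθ0 : 0 < θ) (hθ1 : θ ≤ 1) (hs : 0 < s) (ha : 0 < a) :
    a * Real.exp (-a * s) ≤ s ^ (θ - 1) * a ^ θ := by
  have h1 : (a * s) ^ (1 - θ) ≤ Real.exp (a * s) :=
    aux_rpow_le_exp (mul_pos ha hs) (by linarith) (by linarith)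
  rw [Real.mul_rpow ha.le hs.le] at h1
  have hsp : (0:ℝ) < s ^ (1 - θ) := Real.rpow_pos_of_pos hs _
  have hap : (0:ℝ) < a ^ θ := Real.rpow_pos_of_pos ha _
  have h2 : a ^ (1 - θ) * s ^ (1 - θ) * Real.exp (-a * s) ≤ 1 := by
    have h := mul_le_mul_of_nonneg_right h1 (Real.exp_pos (-a * s)).le
    rwa [← Real.exp_add, show a * s + -a * s = 0 by ring, Real.exp_zero] at h
  have ha' : a ^ θ * a ^ (1 - θ) = a := by
    rw [← Real.rpow_add ha]; norm_num
  have hkey : a * Real.exp (-a * s) * s ^ (1 - θ) ≤ a ^ θ := by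
    calc a * Real.exp (-a * s) * s ^ (1 - θ)
        = a ^ θ * (a ^ (1 - θ) * s ^ (1 - θ) * Real.exp (-a * s)) := by
          nth_rewrite 1 [← ha']; ring
      _ ≤ a ^ θ * 1 := mul_le_mul_of_nonneg_left h2 hap.le
      _ = a ^ θ := mul_one _
  have hst : s ^ (θ - 1) = (s ^ (1 - θ))⁻¹ := by
    rw [show θ - 1 = -(1 - θ) by ring, Real.rpow_neg hs.le]
  rw [hst, inv_mul_eq_div, le_div_iff₀ hsp]
  exact hkey

private lemma aux_coeff {H : Type*} [NormedAddCommGroup H] [InnerProductSpace ℝ H]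
    (e : HilbertBasis ℕ ℝ H) {f : ℕ → ℝ} {y : H}
    (h : HasSum (fun n => f n • (e n : H)) y) (m : ℕ) : ⟪(e m : H), y⟫ = f m := by
  classical
  have h2 : HasSum (fun n => f n * ⟪(e m : H), (e n : H)⟫) ⟪(e m : H), y⟫ := by
    have h2' := (innerSL ℝ (e m : H)).hasSum h
    simpa only [innerSL_apply_apply, real_inner_smul_right] using h2'
  have h3 : (fun n => f n * ⟪(e m : H), (e n : H)⟫) = fun n => if n = m then f m else 0 := by
    funext n
    rw [orthonormal_iff_ite.mp e.orthonormal]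
    rcases eq_or_ne n m with rfl | hn
    · simp
    · simp [hn, Ne.symm hn]
  rw [h3] at h2
  exact h2.unique (hasSum_ite_eq m (f m))

private lemma aux_normsq {H : Type*} [NormedAddCommGroup H] [InnerProductSpace ℝ H]
    (e : HilbertBasis ℕ ℝ H) {f : ℕ → ℝ} {y : H}
    (h : HasSum (fun n => f n • (e n : H)) y) :
    HasSum (fun n => f n ^ 2) (‖y‖ ^ 2) := by
  have h2 := e.hasSum_inner_mul_inner y y
  have h3 : (fun i => ⟪y, (e i : H)⟫ * ⟪(e i : H), y⟫) = fun i => f i ^ 2 := by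
    funext i
    have hc : ⟪(e i : H), y⟫ = f i := aux_coeff e h i
    rw [real_inner_comm, hc, sq]
  rw [h3, real_inner_self_eq_norm_sq] at h2
  exact h2

private lemma aux_summable {H : Type*} [NormedAddCommGroup H] [InnerProductSpace ℝ H]
    [CompleteSpace H] (e : HilbertBasis ℕ ℝ H) (f : ℕ → ℝ)
    (hf : Summable fun n => f n ^ 2) : Summable fun n => f n • (e n : H) := by
  have h := (e.orthonormal.orthogonalFamily.summable_iff_norm_sq_summable f).mpr ?_
  · simpa [LinearIsometry.toSpanSingleton_apply] using h
  · simpa [Real.norm_eq_abs, sq_abs] using hf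

/-- Let `θ ∈ (0,1]` and `x ∈ D((-A)^θ)`.  Then for every `s > 0`
the series `A e^{sA} x := −∑_n α_n e^{-α_n s} ⟨x, e_n⟩ e_n` converges in `H`,
the map `s ↦ A e^{sA} x` is Bochner integrable on `(0,t]` for every `t ≥ 0`,
and `∫₀^t (−A e^{sA} x) ds = x − e^{tA} x`.
Here `S t x = e^{tA} x` is characterized by `hS`. -/
theorem stmt11 {H : Type*} [NormedAddCommGroup H] [InnerProductSpace ℝ H]
    [CompleteSpace H] (e : HilbertBasis ℕ ℝ H) (α : ℕ → ℝ)
    (hmono : Monotone α) (hpos : ∀ n, 0 < α n)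
    (S : ℝ → H → H)
    (hS : ∀ t : ℝ, 0 ≤ t → ∀ x : H,
      HasSum (fun n => (Real.exp (-(α n) * t) * ⟪x, e n⟫) • (e n : H)) (S t x))
    (θ : ℝ) (hθ0 : 0 < θ) (hθ1 : θ ≤ 1) (x : H)
    (hx : Summable fun n => α n ^ (2 * θ) * ⟪x, e n⟫ ^ 2) :
    (∀ s : ℝ, 0 < s →
      Summable fun n => (α n * Real.exp (-(α n) * s) * ⟪x, e n⟫) • (e n : H)) ∧
    (∀ t : ℝ, 0 ≤ t →
      MeasureTheory.IntegrableOn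
        (fun s => -(∑' n, (α n * Real.exp (-(α n) * s) * ⟪x, e n⟫) • (e n : H)))
        (Set.Ioc (0:ℝ) t)) ∧
    (∀ t : ℝ, 0 ≤ t →
      (∫ s in Set.Ioc (0:ℝ) t,
          ∑' n, (α n * Real.exp (-(α n) * s) * ⟪x, e n⟫) • (e n : H))
        = x - S t x) := by
  classical
  -- pointwise square bound
  have hB : ∀ s : ℝ, 0 < s → ∀ n,
      (α n * Real.exp (-(α n) * s) * ⟪x, e n⟫) ^ 2
        ≤ (s ^ (θ - 1)) ^ 2 * (α n ^ (2 * θ) * ⟪x, e n⟫ ^ 2) := by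
    intro s hs n
    have h1 : α n * Real.exp (-(α n) * s) ≤ s ^ (θ - 1) * α n ^ θ :=
      aux_bound hθ0 hθ1 hs (hpos n)
    have h0 : (0:ℝ) ≤ α n * Real.exp (-(α n) * s) := mul_nonneg (hpos n).le (Real.exp_pos _).le
    have h2 : (α n * Real.exp (-(α n) * s)) ^ 2 ≤ (s ^ (θ - 1) * α n ^ θ) ^ 2 :=
      pow_le_pow_left₀ h0 h1 2
    have h3 : (s ^ (θ - 1) * α n ^ θ) ^ 2 = (s ^ (θ - 1)) ^ 2 * α n ^ (2 * θ) := by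
      have h4 : (α n ^ θ) ^ 2 = α n ^ (2 * θ) := by
        rw [sq, ← Real.rpow_add (hpos n)]; ring_nf
      rw [mul_pow, h4]
    calc (α n * Real.exp (-(α n) * s) * ⟪x, e n⟫) ^ 2
        = (α n * Real.exp (-(α n) * s)) ^ 2 * ⟪x, e n⟫ ^ 2 := by ring
      _ ≤ (s ^ (θ - 1) * α n ^ θ) ^ 2 * ⟪x, e n⟫ ^ 2 :=
          mul_le_mul_of_nonneg_right h2 (sq_nonneg _)
      _ = (s ^ (θ - 1)) ^ 2 * (α n ^ (2 * θ) * ⟪x, e n⟫ ^ 2) := by rw [h3]; ring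
  have hsq : ∀ s : ℝ, 0 < s →
      Summable fun n => (α n * Real.exp (-(α n) * s) * ⟪x, e n⟫) ^ 2 := fun s hs =>
    Summable.of_nonneg_of_le (fun n => sq_nonneg _) (hB s hs) (hx.mul_left _)
  have hsum : ∀ s : ℝ, 0 < s →
      Summable fun n => (α n * Real.exp (-(α n) * s) * ⟪x, e n⟫) • (e n : H) := fun s hs =>
    aux_summable e _ (hsq s hs)
  set y : ℝ → H := fun s => ∑' n, (α n * Real.exp (-(α n) * s) * ⟪x, e n⟫) • (e n : H) with hy_def
  have hy : ∀ s : ℝ, 0 < s →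
      HasSum (fun n => (α n * Real.exp (-(α n) * s) * ⟪x, e n⟫) • (e n : H)) (y s) :=
    fun s hs => (hsum s hs).hasSum
  set T : ℝ := ∑' n, α n ^ (2 * θ) * ⟪x, e n⟫ ^ 2 with hT_def
  have hnorm : ∀ s : ℝ, 0 < s → ‖y s‖ ≤ s ^ (θ - 1) * Real.sqrt T := by
    intro s hs
    have h1 := aux_normsq e (hy s hs)
    have h2 : ‖y s‖ ^ 2 ≤ (s ^ (θ - 1)) ^ 2 * T := by
      rw [← h1.tsum_eq]
      calc ∑' n, (α n * Real.exp (-(α n) * s) * ⟪x, e n⟫) ^ 2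
          ≤ ∑' n, (s ^ (θ - 1)) ^ 2 * (α n ^ (2 * θ) * ⟪x, e n⟫ ^ 2) :=
            Summable.tsum_le_tsum (hB s hs) (hsq s hs) (hx.mul_left _)
        _ = (s ^ (θ - 1)) ^ 2 * T := tsum_mul_left
    have hs1 : (0:ℝ) ≤ s ^ (θ - 1) := Real.rpow_nonneg hs.le _
    calc ‖y s‖ = Real.sqrt (‖y s‖ ^ 2) := (Real.sqrt_sq (norm_nonneg _)).symm
      _ ≤ Real.sqrt ((s ^ (θ - 1)) ^ 2 * T) := Real.sqrt_le_sqrt h2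
      _ = s ^ (θ - 1) * Real.sqrt T := by
          rw [Real.sqrt_mul (sq_nonneg _), Real.sqrt_sq hs1]
  have hmeas : ∀ t : ℝ, AEStronglyMeasurable y (volume.restrict (Set.Ioc (0:ℝ) t)) := by
    intro t
    apply aestronglyMeasurable_of_tendsto_ae (u := Filter.atTop)
      (f := fun (N : ℕ) (s : ℝ) =>
        ∑ n ∈ Finset.range N, (α n * Real.exp (-(α n) * s) * ⟪x, e n⟫) • (e n : H))
    · intro N
      apply Continuous.aestronglyMeasurable
      apply continuous_finset_sum
      intro n _
      exact (((continuous_const.mul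
        ((continuous_const.mul continuous_id).rexp)).mul continuous_const)).smul continuous_const
    · filter_upwards [ae_restrict_mem measurableSet_Ioc] with s hs
      exact (hy s hs.1).tendsto_sum_nat
  have hint : ∀ t : ℝ, 0 ≤ t → IntegrableOn y (Set.Ioc (0:ℝ) t) := by
    intro t ht
    have hmaj : IntegrableOn (fun s => s ^ (θ - 1) * Real.sqrt T) (Set.Ioc (0:ℝ) t) := by
      have h1 : IntervalIntegrable (fun s : ℝ => s ^ (θ - 1)) volume 0 t :=
        intervalIntegral.intervalIntegrable_rpow' (by linarith)
      have h2 := h1.mul_const (Real.sqrt T)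
      rwa [intervalIntegrable_iff, Set.uIoc_of_le ht] at h2
    apply Integrable.mono' hmaj (hmeas t)
    filter_upwards [ae_restrict_mem measurableSet_Ioc] with s hs
    exact hnorm s hs.1
  refine ⟨hsum, fun t ht => (hint t ht).neg, ?_⟩
  intro t ht
  have hS' := hS t ht x
  have hIeq : ∀ m : ℕ, ⟪(e m : H), ∫ s in Set.Ioc (0:ℝ) t, y s⟫
      = (1 - Real.exp (-(α m) * t)) * ⟪x, e m⟫ := by
    intro m
    rw [← integral_inner (hint t ht)]
    have hcongr : ∫ s in Set.Ioc (0:ℝ) t, ⟪(e m : H), y s⟫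
        = ∫ s in Set.Ioc (0:ℝ) t, α m * Real.exp (-(α m) * s) * ⟪x, e m⟫ := by
      apply setIntegral_congr_fun measurableSet_Ioc
      intro s hs
      exact aux_coeff e (hy s hs.1) m
    rw [hcongr, ← intervalIntegral.integral_of_le ht,
      intervalIntegral.integral_mul_const]
    have hderiv : ∀ s : ℝ, HasDerivAt (fun u : ℝ => -Real.exp (-(α m) * u))
        (α m * Real.exp (-(α m) * s)) s := by
      intro s
      have h1 : HasDerivAt (fun u : ℝ => -(α m) * u) (-(α m)) s := by
        simpa using (hasDerivAt_id s).const_mul (-(α m))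
      have h3 : HasDerivAt (fun u : ℝ => -Real.exp (-(α m) * u)) (-(Real.exp (-(α m) * s) * -(α m))) s := h1.exp.neg
      convert h3 using 1
      ring
    have hcont : Continuous fun s : ℝ => α m * Real.exp (-(α m) * s) :=
      continuous_const.mul ((continuous_const.mul continuous_id).rexp)
    have hscalar : (∫ s in (0:ℝ)..t, α m * Real.exp (-(α m) * s))
        = 1 - Real.exp (-(α m) * t) := by
      rw [intervalIntegral.integral_eq_sub_of_hasDerivAt (fun s _ => hderiv s)
        (hcont.intervalIntegrable 0 t)]
      simp only [mul_zero, neg_zero, Real.exp_zero]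
      ring
    rw [hscalar]
  apply e.repr.injective
  apply lp.ext
  funext m
  rw [e.repr_apply_apply, e.repr_apply_apply, hIeq m, inner_sub_right,
    aux_coeff e hS' m, real_inner_comm (e m : H) x]
  ring
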